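/- Let G be a graph with a cut-vertex v, and let C_1,...,C_k be the connected components of G−v. If S_i is an MEG-set of the induced subgraph G[C_i ∪ {v}] for each i, then (S_1 ∪ ... ∪ S_k) \ {v} is an MEG-set of G. -/

import Mathlib

open SimpleGraph

/-- Two vertices `x` and `y` monitor an edge `e` in `G`: there is a shortest path between
them, and `e` lies on every shortest path between `x` and `y`. -/
def Monitors {V : Type*} (G : SimpleGraph V) (x y : V) (e : Sym2 V) : Prop :=
  (∃ p : G.Walk x y, p.IsPath ∧ p.length = G.dist x y) ∧
    ∀ p : G.Walk x y, p.IsPath → p.length = G.dist x y → e ∈ p.edges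

/-- `S` is a monitoring edge-geodetic set of `G`. -/
def IsMEGSet {V : Type*} (G : SimpleGraph V) (S : Set V) : Prop :=
  ∀ e ∈ G.edgeSet, ∃ x ∈ S, ∃ y ∈ S, Monitors G x y e

/-- The minimum size of a monitoring edge-geodetic set of `G`. -/
noncomputable def megNum {V : Type*} (G : SimpleGraph V) : ℕ :=
  sInf {n | ∃ S : Set V, IsMEGSet G S ∧ S.ncard = n}

/-- The set of leaves (degree-1 vertices) of `G`. -/
def leaves {V : Type*} (G : SimpleGraph V) : Set V :=
  {v | (G.neighborSet v).ncard = 1}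


/-- `S` is an MEG-set of the subgraph of `G` induced on `s` (with `S ⊆ s`). -/
def IsMEGSetOn {V : Type*} (G : SimpleGraph V) (s S : Set V) : Prop :=
  S ⊆ s ∧ IsMEGSet (G.induce s) {x : ↥s | (x : V) ∈ S}


section Aux
variable {V : Type*} {G : SimpleGraph V}

lemma exists_lift_walk {s : Set V} :
    ∀ {u w : V} (p : G.Walk u w), (∀ x ∈ p.support, x ∈ s) → ∀ (hu : u ∈ s) (hw : w ∈ s),
    ∃ q : (G.induce s).Walk ⟨u, hu⟩ ⟨w, hw⟩,
      q.length = p.length ∧ q.edges.map (Sym2.map Subtype.val) = p.edges ∧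
      q.support.map Subtype.val = p.support := by
  intro u w p
  induction p with
  | nil => intro _ hu hw; exact ⟨Walk.nil, by simp, by simp, by simp⟩
  | @cons u m w h q ih =>
    intro hs hu hw
    have hm : m ∈ s := hs m (by simp)
    obtain ⟨q', h1, h2, h3⟩ := ih (fun x hx => hs x (by simp [hx])) hm hw
    refine ⟨Walk.cons (by exact h : (G.induce s).Adj ⟨u, hu⟩ ⟨m, hm⟩) q', by exact congrArg (· + 1) h1,
      by exact congrArg (s(u, m) :: ·) h2, by exact congrArg (u :: ·) h3⟩

variable {v : V}

/-- The component region together with `v`. -/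
def Acomp (G : SimpleGraph V) (v : V)
    (c : (G.induce {u | u ≠ v}).ConnectedComponent) : Set V :=
  {u : V | ∃ h : u ≠ v, (G.induce {u | u ≠ v}).connectedComponentMk ⟨u, h⟩ = c} ∪ {v}

lemma comp_eq_of_avoid {u w : V} (p : G.Walk u w) (hv : v ∉ p.support)
    (hu : u ≠ v) (hw : w ≠ v) :
    (G.induce {u | u ≠ v}).connectedComponentMk ⟨u, hu⟩ =
      (G.induce {u | u ≠ v}).connectedComponentMk ⟨w, hw⟩ := by
  obtain ⟨q, -, -, -⟩ := exists_lift_walk (s := {u | u ≠ v}) p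
    (fun x hx hxv => hv (hxv ▸ hx)) hu hw
  exact ConnectedComponent.sound ⟨q⟩

lemma support_subset_Acomp {c : (G.induce {u | u ≠ v}).ConnectedComponent} :
    ∀ {u w : V} (p : G.Walk u w), p.IsPath → u ∈ Acomp G v c → w ∈ Acomp G v c →
      ∀ x ∈ p.support, x ∈ Acomp G v c := by
  intro u w p
  induction p with
  | nil => intro _ hu _ x hx; simp at hx; subst hx; exact hu
  | @cons u m w h q ih =>
    intro hp hu hw
    rw [Walk.cons_isPath_iff] at hp
    obtain ⟨hq, huq⟩ := hp
    by_cases hm : m = v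
    · intro x hx
      rcases (by simpa using hx : x = u ∨ x ∈ q.support) with rfl | hx
      · exact hu
      · exact ih hq (Or.inr hm) hw x hx
    · by_cases huv : u = v
      · classical
        -- q avoids v, so all its vertices lie in the component of w = component c
        have hvq : v ∉ q.support := huv ▸ huq
        have hwv : w ≠ v := fun hwv => hvq (hwv ▸ q.end_mem_support)
        have hwc : (G.induce {u' | u' ≠ v}).connectedComponentMk ⟨w, hwv⟩ = c := by
          rcases hw with hw | hw
          · exact hw.choose_spec
          · exact absurd hw hwv
        intro x hx
        rcases (by simpa using hx : x = u ∨ x ∈ q.support) with rfl | hx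
        · exact Or.inr huv
        · have hxv : x ≠ v := fun hxv => hvq (hxv ▸ hx)
          left
          refine ⟨hxv, ?_⟩
          rw [← hwc]
          exact comp_eq_of_avoid (q.dropUntil x hx)
            (fun hmem => hvq (q.support_dropUntil_subset hx hmem)) hxv hwv
      · -- u ≠ v, m ≠ v : adjacency keeps component
        have huc : (G.induce {u' | u' ≠ v}).connectedComponentMk ⟨u, huv⟩ = c := by
          rcases hu with hu | hu
          · exact hu.choose_spec
          · exact absurd hu huv
        have hmc : m ∈ Acomp G v c := by
          left
          refine ⟨hm, ?_⟩
          rw [← huc]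
          exact (ConnectedComponent.sound ⟨Walk.cons (by exact h.symm :
            (G.induce {u' | u' ≠ v}).Adj ⟨m, hm⟩ ⟨u, huv⟩).symm Walk.nil⟩).symm
        intro x hx
        rcases (by simpa using hx : x = u ∨ x ∈ q.support) with rfl | hx
        · exact hu
        · exact ih hq hmc hw x hx

end Aux

section Aux2
variable {V : Type*} {G : SimpleGraph V} {v : V}

lemma dist_induce_Acomp (hG : G.Connected) {c : (G.induce {u | u ≠ v}).ConnectedComponent}
    {u w : V} (hu : u ∈ Acomp G v c) (hw : w ∈ Acomp G v c) :
    (G.induce (Acomp G v c)).dist ⟨u, hu⟩ ⟨w, hw⟩ = G.dist u w := by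
  obtain ⟨p, hp, hl⟩ := (hG u w).exists_path_of_dist
  have hsup := support_subset_Acomp p hp hu hw
  obtain ⟨q, h1, -, -⟩ := exists_lift_walk p hsup hu hw
  apply le_antisymm
  · calc (G.induce (Acomp G v c)).dist ⟨u, hu⟩ ⟨w, hw⟩ ≤ q.length := dist_le q
      _ = p.length := h1
      _ = G.dist u w := hl
  · have hreach : (G.induce (Acomp G v c)).Reachable ⟨u, hu⟩ ⟨w, hw⟩ := ⟨q⟩
    obtain ⟨r, hr⟩ := hreach.exists_walk_length_eq_dist
    have := dist_le (r.map (Embedding.induce (Acomp G v c)).toHom)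
    rwa [Walk.length_map, hr] at this

lemma mon_transfer (hG : G.Connected) {c : (G.induce {u | u ≠ v}).ConnectedComponent}
    {x y : ↥(Acomp G v c)} {e : Sym2 ↥(Acomp G v c)}
    (hmon : Monitors (G.induce (Acomp G v c)) x y e) :
    ∀ p : G.Walk ↑x ↑y, p.IsPath → p.length = G.dist ↑x ↑y →
      Sym2.map Subtype.val e ∈ p.edges := by
  intro p hp hl
  have hsup := support_subset_Acomp p hp x.2 y.2
  obtain ⟨q, h1, h2, h3⟩ := exists_lift_walk p hsup x.2 y.2
  have hq : q.IsPath := by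
    rw [Walk.isPath_def]
    exact (h3 ▸ hp.support_nodup).of_map _
  have hql : q.length = (G.induce (Acomp G v c)).dist x y := by
    rw [h1, hl, ← dist_induce_Acomp hG x.2 y.2]
  have := hmon.2 q hq hql
  rw [← h2]
  exact List.mem_map_of_mem this

lemma monitors_aux_symm {W : Type*} {G : SimpleGraph W} {x y : W} {e : Sym2 W}
    (h : Monitors G x y e) : Monitors G y x e := by
  obtain ⟨⟨p, hp, hl⟩, h2⟩ := h
  refine ⟨⟨p.reverse, hp.reverse, by rw [Walk.length_reverse, hl, dist_comm]⟩, ?_⟩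
  intro q hq hql
  have := h2 q.reverse hq.reverse (by rw [Walk.length_reverse, hql, dist_comm])
  rw [Walk.edges_reverse, List.mem_reverse] at this
  exact this

lemma monitors_aux_ne {W : Type*} {G : SimpleGraph W} {x : W} {e : Sym2 W}
    (h : Monitors G x x e) : False := by
  have := h.2 Walk.nil (by simp) (by simp [dist_self])
  simp at this

lemma cross_monitors (hG : G.Connected) {c c' : (G.induce {u | u ≠ v}).ConnectedComponent}
    (hcc' : c' ≠ c) {x' : V} (hx'v : x' ≠ v)
    (hx'c : (G.induce {u | u ≠ v}).connectedComponentMk ⟨x', hx'v⟩ = c')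
    {y : ↥(Acomp G v c)} (hyv : (y : V) ≠ v) {e : Sym2 ↥(Acomp G v c)}
    (hmon : Monitors (G.induce (Acomp G v c)) ⟨v, Or.inr rfl⟩ y e) :
    Monitors G x' ↑y (Sym2.map Subtype.val e) := by
  classical
  have hyc : (G.induce {u | u ≠ v}).connectedComponentMk ⟨↑y, hyv⟩ = c := by
    rcases y.2 with hy | hy
    · exact hy.choose_spec
    · exact absurd hy hyv
  constructor
  · exact (hG x' ↑y).exists_path_of_dist
  · intro p hp hl
    have hv : v ∈ p.support := by
      by_contra hv
      exact hcc' ((hx'c.symm.trans (comp_eq_of_avoid p hv hx'v hyv)).trans hyc)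
    have hspec := p.take_spec hv
    have hlen : (p.takeUntil v hv).length + (p.dropUntil v hv).length = p.length := by
      rw [← Walk.length_append, hspec]
    have h1 : G.dist x' v ≤ (p.takeUntil v hv).length := dist_le _
    have h2 : G.dist v ↑y ≤ (p.dropUntil v hv).length := dist_le _
    have htri : G.dist x' ↑y ≤ G.dist x' v + G.dist v ↑y := hG.dist_triangle
    have hd : (p.dropUntil v hv).length = G.dist v ↑y := by omega
    have := mon_transfer hG hmon (p.dropUntil v hv) (hp.dropUntil hv) hd
    exact p.edges_dropUntil_subset hv this

end Aux2

section Aux3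
variable {V : Type*} {G : SimpleGraph V} {v : V}

lemma exists_S_vertex (hG : G.Connected) {c' : (G.induce {u | u ≠ v}).ConnectedComponent}
    {S' : Set V} (hS' : IsMEGSetOn G (Acomp G v c') S') :
    ∃ x' ∈ S', x' ≠ v := by
  obtain ⟨u0, hu0⟩ := c'.exists_rep
  have hu0v : (u0 : V) ≠ v := u0.2
  have hu0A : (u0 : V) ∈ Acomp G v c' := Or.inl ⟨hu0v, hu0⟩
  obtain ⟨p, hp, hl⟩ := (hG ↑u0 v).exists_path_of_dist
  have hnn : ¬ p.Nil := Walk.not_nil_of_ne hu0v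
  obtain ⟨m, hadj, q, rfl⟩ := Walk.not_nil_iff.mp hnn
  have hsup := support_subset_Acomp (Walk.cons hadj q) hp hu0A (Or.inr rfl)
  have hmA : m ∈ Acomp G v c' := hsup m (by simp)
  have he0 : s(⟨(u0 : V), hu0A⟩, ⟨m, hmA⟩) ∈ (G.induce (Acomp G v c')).edgeSet := by
    exact hadj
  obtain ⟨x₀, hx₀, y₀, hy₀, hm0⟩ := hS'.2 _ he0
  have hxy : x₀ ≠ y₀ := fun h => monitors_aux_ne (h ▸ hm0)
  by_cases h : (x₀ : V) = v
  · exact ⟨↑y₀, hy₀, fun hy => hxy (Subtype.ext (h.trans hy.symm))⟩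
  · exact ⟨↑x₀, hx₀, h⟩

lemma case_v (hG : G.Connected)
    (hcut : ¬ (G.induce {u | u ≠ v}).Connected)
    (S : (G.induce {u | u ≠ v}).ConnectedComponent → Set V)
    (hS : ∀ c, IsMEGSetOn G (Acomp G v c) (S c))
    {c : (G.induce {u | u ≠ v}).ConnectedComponent}
    {y : ↥(Acomp G v c)} (hyS : ↑y ∈ S c) (hyv : (y : V) ≠ v)
    {e'' : Sym2 ↥(Acomp G v c)}
    (hmon : Monitors (G.induce (Acomp G v c)) ⟨v, Or.inr rfl⟩ y e'') :
    ∃ x ∈ (⋃ c, S c) \ {v}, ∃ z ∈ (⋃ c, S c) \ {v},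
      Monitors G x z (Sym2.map Subtype.val e'') := by
  haveI hne : Nonempty ↥{u : V | u ≠ v} := ⟨⟨↑y, hyv⟩⟩
  have hpre : ¬ (G.induce {u : V | u ≠ v}).Preconnected := fun h => hcut ⟨h⟩
  rw [Preconnected] at hpre
  push_neg at hpre
  obtain ⟨a1, b1, hnr⟩ := hpre
  have hab : (G.induce {u : V | u ≠ v}).connectedComponentMk a1 ≠
      (G.induce {u : V | u ≠ v}).connectedComponentMk b1 :=
    fun h => hnr (ConnectedComponent.exact h)
  obtain ⟨c', hc'⟩ : ∃ c', c' ≠ c := by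
    by_cases h : (G.induce {u : V | u ≠ v}).connectedComponentMk a1 = c
    · exact ⟨_, fun hh => hab (h.trans hh.symm)⟩
    · exact ⟨_, h⟩
  obtain ⟨x', hx'S, hx'v⟩ := exists_S_vertex hG (hS c')
  have hx'A : x' ∈ Acomp G v c' := (hS c').1 hx'S
  have hx'c : (G.induce {u : V | u ≠ v}).connectedComponentMk ⟨x', hx'v⟩ = c' := by
    rcases hx'A with h | h
    · exact h.choose_spec
    · exact absurd h hx'v
  have hcross := cross_monitors hG hc' hx'v hx'c hyv hmon
  exact ⟨x', ⟨Set.mem_iUnion.2 ⟨c', hx'S⟩, hx'v⟩,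
    ↑y, ⟨Set.mem_iUnion.2 ⟨c, hyS⟩, hyv⟩, hcross⟩

end Aux3

theorem cutVertex_union_MEG {V : Type*} [Fintype V] (G : SimpleGraph V)
    (hG : G.Connected) (v : V)
    (hcut : ¬ (G.induce {u | u ≠ v}).Connected)
    (S : (G.induce {u | u ≠ v}).ConnectedComponent → Set V)
    (hS : ∀ c, IsMEGSetOn G
      ({u : V | ∃ h : u ≠ v, (G.induce {u | u ≠ v}).connectedComponentMk ⟨u, h⟩ = c} ∪ {v})
      (S c)) :
    IsMEGSet G ((⋃ c, S c) \ {v}) := by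
  have hS' : ∀ c, IsMEGSetOn G (Acomp G v c) (S c) := hS
  intro e he
  induction e using Sym2.ind with
  | _ a b =>
  rw [mem_edgeSet] at he
  obtain ⟨c, haA, hbA⟩ : ∃ c, a ∈ Acomp G v c ∧ b ∈ Acomp G v c := by
    by_cases ha : a = v
    · have hb : b ≠ v := fun h => he.ne (ha.trans h.symm)
      exact ⟨_, Or.inr ha, Or.inl ⟨hb, rfl⟩⟩
    · by_cases hb : b = v
      · exact ⟨_, Or.inl ⟨ha, rfl⟩, Or.inr hb⟩
      · have hadj : (G.induce {u | u ≠ v}).Adj ⟨a, ha⟩ ⟨b, hb⟩ := he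
        exact ⟨_, Or.inl ⟨ha, rfl⟩,
          Or.inl ⟨hb, ConnectedComponent.sound ⟨Walk.cons hadj.symm Walk.nil⟩⟩⟩
  have he'' : s(⟨a, haA⟩, ⟨b, hbA⟩) ∈ (G.induce (Acomp G v c)).edgeSet := he
  obtain ⟨x, hxS, y, hyS, hmon⟩ := (hS' c).2 _ he''
  have hxy : x ≠ y := fun h => monitors_aux_ne (h ▸ hmon)
  have hemap : Sym2.map Subtype.val s((⟨a, haA⟩ : ↥(Acomp G v c)), ⟨b, hbA⟩) = s(a, b) := rfl
  by_cases hxv : (x : V) = v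
  · have hyv : (y : V) ≠ v := fun h => hxy (Subtype.ext (hxv.trans h.symm))
    have hxeq : x = (⟨v, Or.inr rfl⟩ : ↥(Acomp G v c)) := Subtype.ext hxv
    rw [hxeq] at hmon
    exact hemap ▸ case_v hG hcut S hS' hyS hyv hmon
  · by_cases hyv : (y : V) = v
    · have hmon' := monitors_aux_symm hmon
      have hyeq : y = (⟨v, Or.inr rfl⟩ : ↥(Acomp G v c)) := Subtype.ext hyv
      rw [hyeq] at hmon'
      exact hemap ▸ case_v hG hcut S hS' hxS hxv hmon'
    · refine ⟨↑x, ⟨Set.mem_iUnion.2 ⟨c, hxS⟩, hxv⟩, ↑y, ⟨Set.mem_iUnion.2 ⟨c, hyS⟩, hyv⟩, ?_⟩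
      rw [← hemap]
      exact ⟨(hG ↑x ↑y).exists_path_of_dist, mon_transfer hG hmon⟩
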